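/- (Proposition 1, stationarity part.) The distribution π is stationary for the transition function q: for every n₂ ∈ ℕ, Σ'_{n₁ ∈ ℕ} π n₁ · q n₁ n₂ = π n₂. -/

import Mathlib

/-- Proposition 1, stationarity part: `π` is stationary for `q`. -/
theorem stmt_2 (M : ℕ) (hM : 1 ≤ M) (μ ξ : ℝ)
    (hμ : μ ∈ Set.Ioo (0 : ℝ) 1) (hξ : ξ ∈ Set.Ioo (0 : ℝ) 1)
    (σ : ℝ) (hσ : σ = 1 - (1 - μ) ^ M)
    (q : ℕ → ℕ → ℝ)
    (hq : ∀ n₁ n₂, q n₁ n₂ =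
      if n₂ ≤ M - 1 then ξ * μ * (1 - μ) ^ n₂ / σ
      else if n₂ = n₁ + M then 1 - ξ else 0)
    (π : ℕ → ℝ)
    (hπ : ∀ w, π w = ξ * (1 - ξ) ^ (w / M) * μ * (1 - μ) ^ (w % M) / σ) :
    ∀ n₂ : ℕ, ∑' n₁ : ℕ, π n₁ * q n₁ n₂ = π n₂ := by
  obtain ⟨hμ0, hμ1⟩ := hμ
  obtain ⟨hξ0, hξ1⟩ := hξ
  have h1μ0 : (0:ℝ) ≤ 1 - μ := by linarith
  have h1μ1 : (1:ℝ) - μ < 1 := by linarith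
  have hσ0 : 0 < σ := by
    rw [hσ]
    have : (1 - μ) ^ M < 1 := pow_lt_one₀ h1μ0 h1μ1 (by omega)
    linarith
  haveI : NeZero M := ⟨by omega⟩
  -- summable pieces
  set a : ℕ → ℝ := fun k => ξ * (1 - ξ) ^ k with ha
  set b : Fin M → ℝ := fun r => μ * (1 - μ) ^ (r : ℕ) / σ with hb
  have hsa : Summable a :=
    (summable_geometric_of_lt_one (by linarith) (by linarith)).mul_left ξ
  have hsb : Summable b := (hasSum_fintype b).summable
  have hsg : Summable (fun p : ℕ × Fin M => a p.1 * b p.2) := by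
    refine hsa.mul_of_nonneg hsb (fun k => ?_) (fun r => ?_)
    · exact mul_nonneg hξ0.le (pow_nonneg (by linarith) _)
    · exact div_nonneg (mul_nonneg hμ0.le (pow_nonneg h1μ0 _)) hσ0.le
  have hπg : ∀ w, π w = a (w / M) * b ((Nat.divModEquiv M w).2) := by
    intro w
    have hv : (((Nat.divModEquiv M w).2 : Fin M) : ℕ) = w % M := by
      simp [Nat.divModEquiv, Fin.val_natCast]
    rw [hπ, ha, hb]
    simp only [hv]
    ring
  have hπcomp : π = (fun p : ℕ × Fin M => a p.1 * b p.2) ∘ (Nat.divModEquiv M) := by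
    funext w
    simp [hπg w, Nat.divModEquiv]
  have hsπ : Summable π := by
    rw [hπcomp]
    exact ((Nat.divModEquiv M).summable_iff).2 hsg
  have hta : ∑' k, a k = 1 := by
    rw [ha, tsum_mul_left, tsum_geometric_of_lt_one (by linarith) (by linarith)]
    field_simp
    rw [sub_sub_cancel, div_self hξ0.ne']
  have htb : ∑' r : Fin M, b r = 1 := by
    rw [tsum_fintype]
    have : ∑ r : Fin M, b r = (μ / σ) * ∑ i ∈ Finset.range M, (1 - μ) ^ i := by
      rw [Finset.mul_sum, ← Fin.sum_univ_eq_sum_range]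
      exact Finset.sum_congr rfl fun r _ => by rw [hb]; ring
    rw [this, geom_sum_eq (by intro h; apply hμ0.ne'; linarith)]
    have h1 : (1 - μ) ^ M - 1 = -(1 - (1 - μ) ^ M) := by ring
    have h2 : (1 - μ) - 1 = -μ := by ring
    have hσ' : 1 - (1 - μ) ^ M ≠ 0 := by rw [← hσ]; exact hσ0.ne'
    rw [hσ, h1, h2, neg_div_neg_eq]
    field_simp
  have htπ : ∑' w, π w = 1 := by
    rw [hπcomp, Function.comp_def]
    exact ((Nat.divModEquiv M).tsum_eq fun p => a p.1 * b p.2).trans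
      (by rw [← Summable.tsum_mul_tsum hsa hsb hsg, hta, htb, mul_one])
  intro n₂
  by_cases hn : n₂ ≤ M - 1
  · -- n₂ < M
    have hq' : ∀ n₁, q n₁ n₂ = ξ * μ * (1 - μ) ^ n₂ / σ := fun n₁ => by
      rw [hq]; simp [hn]
    have : ∑' n₁, π n₁ * q n₁ n₂ = (∑' n₁, π n₁) * (ξ * μ * (1 - μ) ^ n₂ / σ) := by
      rw [← tsum_mul_right]
      exact tsum_congr fun n₁ => by rw [hq']
    rw [this, htπ, one_mul, hπ]
    have hlt : n₂ < M := by omega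
    rw [Nat.div_eq_of_lt hlt, Nat.mod_eq_of_lt hlt]
    ring
  · -- n₂ ≥ M
    have hge : M ≤ n₂ := by omega
    obtain ⟨k, rfl⟩ : ∃ k, n₂ = k + M := ⟨n₂ - M, by omega⟩
    rw [tsum_eq_single k (by
      intro n₁ hne
      rw [hq, if_neg hn, if_neg (by omega), mul_zero])]
    rw [hq, if_neg hn, if_pos rfl, hπ, hπ, Nat.add_div_right _ (by omega),
      Nat.add_mod_right, pow_succ]
    ring
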